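/- Let A ∈ ℝ^{n×n}, B ∈ ℝ^{n×m}, C ∈ ℝ^{p×n}, E ∈ ℝ^{n×r}, and let U_p ∈ ℝ^{m×N}, D_p ∈ ℝ^{r×N}, X_p, X_f ∈ ℝ^{n×N}, Y_f ∈ ℝ^{p×N} satisfy X_f = A·X_p + B·U_p + E·D_p and Y_f = C·X_f, with the stacked (m+r+n)×N matrix [U_p; D_p; X_p] of full row rank m+r+n. Then a triple (T₁, T₃, T₄) ∈ ℝ^{n×m} × ℝ^{n×n} × ℝ^{n×p} satisfies X_f = T₁·U_p + T₃·X_p + T₄·Y_f if and only if T₄·C·E = E, T₁ = (I_n − T₄·C)·B, and T₃ = (I_n − T₄·C)·A. -/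

import Mathlib

open Matrix

lemma aux_li {k N : Type*} [Fintype k] [Fintype N] {S : Matrix k N ℝ}
    (hS : LinearIndependent ℝ S) {n : Type*} [Fintype n]
    (M : Matrix n k ℝ) (h : M * S = 0) : M = 0 := by
  ext i j
  have := Fintype.linearIndependent_iff.mp hS (fun l => M i l) ?_ j
  · exact this
  · funext x
    have := congrFun (congrFun h i) x
    simpa [Matrix.mul_apply, Finset.sum_apply] using this

/-- Characterization of all solutions (T₁, T₃, T₄) of the data equation
X_f = T₁U_p + T₃X_p + T₄Y_f. -/
theorem stmt_12 {n m p r N : ℕ}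
    (A : Matrix (Fin n) (Fin n) ℝ) (B : Matrix (Fin n) (Fin m) ℝ)
    (C : Matrix (Fin p) (Fin n) ℝ) (E : Matrix (Fin n) (Fin r) ℝ)
    (U_p : Matrix (Fin m) (Fin N) ℝ) (D_p : Matrix (Fin r) (Fin N) ℝ)
    (X_p X_f : Matrix (Fin n) (Fin N) ℝ) (Y_f : Matrix (Fin p) (Fin N) ℝ)
    (hdata : X_f = A * X_p + B * U_p + E * D_p)
    (hYf : Y_f = C * X_f)
    (hFRR : (Matrix.fromRows U_p (Matrix.fromRows D_p X_p)).rank = m + r + n)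
    (T₁ : Matrix (Fin n) (Fin m) ℝ) (T₃ : Matrix (Fin n) (Fin n) ℝ)
    (T₄ : Matrix (Fin n) (Fin p) ℝ) :
    X_f = T₁ * U_p + T₃ * X_p + T₄ * Y_f ↔
      (T₄ * C * E = E ∧ T₁ = (1 - T₄ * C) * B ∧ T₃ = (1 - T₄ * C) * A) := by
  set S := Matrix.fromRows U_p (Matrix.fromRows D_p X_p) with hSdef
  have hli : LinearIndependent ℝ S := by
    change LinearIndependent ℝ S.row
    rw [linearIndependent_iff_card_eq_finrank_span]
    rw [Set.finrank, ← Matrix.rank_eq_finrank_span_row, hFRR]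
    simp [add_assoc]
  constructor
  · intro heq
    have hz : ((1 - T₄ * C) * B - T₁) * U_p + (((1 - T₄ * C) * E) * D_p
        + ((1 - T₄ * C) * A - T₃) * X_p) = 0 := by
      have h1 : X_f = T₁ * U_p + T₃ * X_p
          + T₄ * C * (A * X_p + B * U_p + E * D_p) := by
        rw [heq, hYf, hdata, Matrix.mul_assoc]
      rw [hdata] at h1
      have h2 := sub_eq_zero_of_eq h1
      rw [← h2]
      simp only [Matrix.sub_mul, Matrix.add_mul, Matrix.mul_add, Matrix.one_mul,
        Matrix.neg_mul, Matrix.mul_assoc, sub_eq_add_neg, neg_add]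
      abel
    have hz2 : Matrix.fromCols ((1 - T₄ * C) * B - T₁)
        (Matrix.fromCols ((1 - T₄ * C) * E) ((1 - T₄ * C) * A - T₃)) * S = 0 := by
      rw [hSdef, Matrix.fromCols_mul_fromRows, Matrix.fromCols_mul_fromRows]
      exact hz
    have hM := aux_li hli _ hz2
    have h1 : (1 - T₄ * C) * B - T₁ = 0 := by
      ext i j; exact congrFun (congrFun hM i) (Sum.inl j)
    have h2 : (1 - T₄ * C) * E = 0 := by
      ext i j; exact congrFun (congrFun hM i) (Sum.inr (Sum.inl j))
    have h3 : (1 - T₄ * C) * A - T₃ = 0 := by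
      ext i j; exact congrFun (congrFun hM i) (Sum.inr (Sum.inr j))
    refine ⟨?_, ?_, ?_⟩
    · have h2' : E - T₄ * C * E = 0 := by
        rw [← h2]
        simp only [Matrix.sub_mul, Matrix.one_mul]
      exact (sub_eq_zero.mp h2').symm
    · exact (sub_eq_zero.mp h1).symm
    · exact (sub_eq_zero.mp h3).symm
  · rintro ⟨h4, h1, h3⟩
    rw [h1, h3, hYf, hdata]
    have hexp : T₄ * (C * (A * X_p + B * U_p + E * D_p))
        = T₄ * C * A * X_p + T₄ * C * B * U_p + T₄ * C * E * D_p := by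
      simp only [Matrix.mul_add, Matrix.mul_assoc]
    rw [hexp, h4]
    simp only [Matrix.sub_mul, Matrix.add_mul, Matrix.mul_add, Matrix.one_mul,
      Matrix.neg_mul, Matrix.mul_assoc, sub_eq_add_neg, neg_add]
    abel
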